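/- (Expected gradient of the squared log-ratio loss equals twice the KL gradient.) Let E be a finite-dimensional real normed vector space, Γ a finite type, q : Γ → ℝ with q(τ) > 0 for all τ, and p : E → Γ → ℝ a parametrized family such that for every θ ∈ E and τ ∈ Γ, p(θ,τ) > 0, ∑_{τ∈Γ} p(θ,τ) = 1, and θ ↦ p(θ,τ) is differentiable. Then for every θ ∈ E, ∑_{τ∈Γ} p(θ,τ)·∇_θ[(log(p(θ,τ)/q(τ)))²] = 2·∇_θ[∑_{τ∈Γ} p(θ,τ)·log(p(θ,τ)/q(τ))], where ∇_θ denotes the Fréchet derivative with respect to θ. -/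

import Mathlib

/-- The expected gradient of the squared log-ratio loss equals twice the
gradient of the (generalized) KL divergence:
`∑_τ p(θ,τ)·∇_θ (log(p(θ,τ)/q(τ)))² = 2·∇_θ ∑_τ p(θ,τ)·log(p(θ,τ)/q(τ))`. -/
theorem expected_grad_sq_log_ratio_eq_two_kl_grad
    {E : Type*} [NormedAddCommGroup E] [NormedSpace ℝ E] [FiniteDimensional ℝ E]
    {Γ : Type*} [Fintype Γ]
    (q : Γ → ℝ) (hq : ∀ τ, 0 < q τ)
    (p : E → Γ → ℝ)
    (hpos : ∀ θ τ, 0 < p θ τ)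
    (hsum : ∀ θ, ∑ τ, p θ τ = 1)
    (hdiff : ∀ τ, Differentiable ℝ (fun θ => p θ τ)) :
    ∀ θ : E,
      ∑ τ, p θ τ • fderiv ℝ (fun θ' => (Real.log (p θ' τ / q τ)) ^ 2) θ =
        (2 : ℝ) •
          fderiv ℝ (fun θ' => ∑ τ, p θ' τ * Real.log (p θ' τ / q τ)) θ := by
  intro θ
  classical
  set D : Γ → E →L[ℝ] ℝ := fun τ => fderiv ℝ (fun θ' => p θ' τ) θ with hDdef
  have hD : ∀ τ, HasFDerivAt (fun θ' => p θ' τ) (D τ) θ :=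
    fun τ => ((hdiff τ) θ).hasFDerivAt
  have hlog : ∀ τ, HasFDerivAt (fun θ' => Real.log (p θ' τ / q τ))
      ((p θ τ)⁻¹ • D τ) θ := by
    intro τ
    have heq : (fun θ' => Real.log (p θ' τ / q τ))
        = fun θ' => Real.log (p θ' τ) - Real.log (q τ) := by
      funext θ'
      rw [Real.log_div (hpos θ' τ).ne' (hq τ).ne']
    rw [heq]
    exact ((hD τ).log (hpos θ τ).ne').sub_const _
  have hsq : ∀ τ, HasFDerivAt (fun θ' => (Real.log (p θ' τ / q τ)) ^ 2)
      (((2 : ℝ) * Real.log (p θ τ / q τ)) • ((p θ τ)⁻¹ • D τ)) θ := by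
    intro τ
    have heq : (fun θ' => (Real.log (p θ' τ / q τ)) ^ 2)
        = fun θ' => Real.log (p θ' τ / q τ) * Real.log (p θ' τ / q τ) := by
      funext θ'; ring
    rw [heq]
    have h := (hlog τ).fun_mul (hlog τ)
    rw [two_mul, add_smul]
    exact h
  have hterm : ∀ τ, HasFDerivAt (fun θ' => p θ' τ * Real.log (p θ' τ / q τ))
      (p θ τ • ((p θ τ)⁻¹ • D τ) + Real.log (p θ τ / q τ) • D τ) θ :=
    fun τ => (hD τ).mul (hlog τ)
  have hsumD : HasFDerivAt (fun θ' => ∑ τ, p θ' τ) (∑ τ, D τ) θ := by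
    simpa using HasFDerivAt.fun_sum (fun τ (_ : τ ∈ Finset.univ) => hD τ)
  have hDsum0 : (∑ τ, D τ) = 0 := by
    have h1 : HasFDerivAt (fun _ : E => (1 : ℝ)) (∑ τ, D τ) θ := by
      have heq : (fun θ' => ∑ τ, p θ' τ) = fun _ => (1 : ℝ) := funext hsum
      rwa [heq] at hsumD
    exact h1.unique (hasFDerivAt_const _ _)
  have hRHS : HasFDerivAt (fun θ' => ∑ τ, p θ' τ * Real.log (p θ' τ / q τ))
      (∑ τ, (p θ τ • ((p θ τ)⁻¹ • D τ) + Real.log (p θ τ / q τ) • D τ)) θ := by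
    simpa using HasFDerivAt.fun_sum (fun τ (_ : τ ∈ Finset.univ) => hterm τ)
  rw [hRHS.fderiv]
  have hself : ∀ τ, p θ τ • ((p θ τ)⁻¹ • D τ) = D τ := fun τ => by
    rw [smul_smul, mul_inv_cancel₀ (hpos θ τ).ne', one_smul]
  simp only [fun τ => (hsq τ).fderiv, hself]
  rw [Finset.sum_add_distrib, hDsum0, zero_add, Finset.smul_sum]
  refine Finset.sum_congr rfl fun τ _ => ?_
  rw [smul_smul, smul_smul, smul_smul]
  congr 1
  field_simp [(hpos θ τ).ne']
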